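/- Let n be even with n ≥ 6, and let G be an n-vertex conjugated unicyclic graph. Let U̅_2 be the n-vertex unicyclic graph obtained from the path v_1 v_2 … v_n by adding the edge v_1 v_3 (which has a perfect matching since n is even). Then τ(G) ≤ τ(U̅_2); that is, U̅_2 has the maximal total-eccentricity index among all n-vertex conjugated unicyclic graphs. -/

import Mathlib

open SimpleGraph Finset

/-- The eccentricity of a vertex `v` in a graph `G`: the maximum distance from `v`
to any vertex of `G`. -/
noncomputable def ecc {V : Type} [Fintype V] (G : SimpleGraph V) (v : V) : ℕ :=
  Finset.univ.sup fun w => G.dist v w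

/-- The total-eccentricity index `τ(G) = ∑_{v ∈ V(G)} e_G(v)`. -/
noncomputable def totalEcc {V : Type} [Fintype V] (G : SimpleGraph V) : ℕ :=
  ∑ v : V, ecc G v

/-- `sfun d = ∑_{k=0}^{d} min k (d-k) = ⌊d²/4⌋`. -/
private def sfun (d : ℕ) : ℕ := ∑ k ∈ Finset.range (d + 1), min k (d - k)

private lemma sfun_succ_le (d : ℕ) : sfun (d + 1) ≤ sfun d + (d + 1) / 2 := by
  have h1 : sfun (d + 1) = ∑ k ∈ Finset.range (d + 1), min k (d + 1 - k) := by
    unfold sfun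
    rw [Finset.sum_range_succ]
    simp
  have h2 : ∀ k ∈ Finset.range (d + 1),
      min k (d + 1 - k) ≤ min k (d - k) + (if d < 2 * k then 1 else 0) := by
    intro k hk
    rw [Finset.mem_range] at hk
    simp only [Nat.min_def]
    split_ifs <;> omega
  have h3 : sfun (d + 1) ≤ (∑ k ∈ Finset.range (d + 1), min k (d - k))
      + (∑ k ∈ Finset.range (d + 1), (if d < 2 * k then 1 else 0)) := by
    rw [h1, ← Finset.sum_add_distrib]
    exact Finset.sum_le_sum h2
  have h4 : (∑ k ∈ Finset.range (d + 1), (if d < 2 * k then 1 else 0))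
      = ((Finset.range (d + 1)).filter (fun k => d < 2 * k)).card := by
    rw [Finset.card_filter]
  have h5 : ((Finset.range (d + 1)).filter (fun k => ¬ d < 2 * k)) = Finset.range (d / 2 + 1) := by
    ext k
    simp only [Finset.mem_filter, Finset.mem_range, not_lt]
    omega
  classical
  have h6 := Finset.card_filter_add_card_filter_not
    (s := Finset.range (d + 1)) (p := fun k => d < 2 * k)
  rw [h5, Finset.card_range, Finset.card_range] at h6
  have hb : sfun d = ∑ k ∈ Finset.range (d + 1), min k (d - k) := rfl
  omega

private lemma sfun_sq (d : ℕ) : 4 * sfun d + d % 2 ≤ d * d := by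
  induction d with
  | zero => simp [sfun]
  | succ d ih =>
    have h1 := sfun_succ_le d
    have hexp : (d + 1) * (d + 1) = d * d + 2 * d + 1 := by ring
    omega

private lemma sfun_mono_lin (n' a : ℕ) :
    ∀ b, a ≤ b → b ≤ n' → n' * a + sfun b ≤ n' * b + sfun a := by
  intro b
  induction b with
  | zero =>
    intro h1 _
    have ha0 : a = 0 := by omega
    subst ha0
    exact le_rfl
  | succ b ih =>
    intro h1 h2
    rcases Nat.lt_or_ge a (b + 1) with h | h
    · have hab : a ≤ b := by omega
      have hih := ih hab (by omega)
      have h1' := sfun_succ_le b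
      have h2' : n' * (b + 1) = n' * b + n' := by ring
      omega
    · have hab1 : a = b + 1 := by omega
      subst hab1
      exact le_rfl

section GraphHelpers

variable {V : Type} {H : SimpleGraph V}

private lemma dist_le_one_of_adj {a b : V} (h : H.Adj a b) : H.dist a b ≤ 1 := by
  simpa using SimpleGraph.dist_le (Walk.cons h Walk.nil)

private lemma chain_dist (hc : H.Connected) (f : ℕ → V) (a : ℕ) :
    ∀ b, a ≤ b → (∀ k, a ≤ k → k < b → H.Adj (f k) (f (k + 1))) →
      H.dist (f a) (f b) ≤ b - a := by
  intro b
  induction b with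
  | zero =>
    intro h _
    have ha0 : a = 0 := by omega
    subst ha0
    simp
  | succ b ih =>
    intro h hadj
    rcases Nat.lt_or_ge a (b + 1) with h' | h'
    · have h1 : H.dist (f a) (f b) ≤ b - a :=
        ih (by omega) (fun k hk1 hk2 => hadj k hk1 (by omega))
      have h2 : H.dist (f b) (f (b + 1)) ≤ 1 :=
        dist_le_one_of_adj (hadj b (by omega) (by omega))
      have h3 := hc.dist_triangle (u := f a) (v := f b) (w := f (b + 1))
      omega
    · have hab1 : a = b + 1 := by omega
      subst hab1
      simp

private lemma reach_chain (H : SimpleGraph V) (f : ℕ → V) (a : ℕ) :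
    ∀ b, a ≤ b → (∀ k, a ≤ k → k < b → H.Adj (f k) (f (k + 1))) →
      H.Reachable (f a) (f b) := by
  intro b
  induction b with
  | zero =>
    intro h _
    have ha0 : a = 0 := by omega
    subst ha0
    exact Reachable.refl _
  | succ b ih =>
    intro h hadj
    rcases Nat.lt_or_ge a (b + 1) with h' | h'
    · exact (ih (by omega) (fun k h1 h2 => hadj k h1 (by omega))).trans
        (hadj b (by omega) (by omega)).reachable
    · have hab1 : a = b + 1 := by omega
      subst hab1
      exact Reachable.refl _

private lemma walk_covers [Fintype V] {x y : V} (p : H.Walk x y) (hp : p.IsPath)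
    (hlen : p.length + 1 = Fintype.card V) (v : V) : v ∈ p.support := by
  classical
  have hnodup := hp.support_nodup
  have hlen' : p.support.length = Fintype.card V := by
    rw [Walk.length_support]; omega
  have huniv : p.support.toFinset = Finset.univ := by
    apply Finset.eq_univ_of_card
    rw [List.toFinset_card_of_nodup hnodup, hlen']
  have : v ∈ p.support.toFinset := by rw [huniv]; exact Finset.mem_univ v
  exact List.mem_toFinset.mp this

private lemma geo_exact (hc : H.Connected) {x y : V} (p : H.Walk x y)
    (hgeo : p.length = H.dist x y) {k : ℕ} (hk : k ≤ p.length) :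
    H.dist x (p.getVert k) = k ∧ H.dist (p.getVert k) y = p.length - k := by
  have h1 : H.dist x (p.getVert k) ≤ k := by
    have := chain_dist hc p.getVert 0 k (by omega)
      (fun i _ h2 => p.adj_getVert_succ (by omega))
    simpa [p.getVert_zero] using this
  have h2 : H.dist (p.getVert k) y ≤ p.length - k := by
    have := chain_dist hc p.getVert k p.length hk
      (fun i _ h2 => p.adj_getVert_succ h2)
    simpa [p.getVert_length] using this
  have h3 := hc.dist_triangle (u := x) (v := p.getVert k) (w := y)
  constructor <;> omega

private lemma geo_inj (hc : H.Connected) {x y : V} (p : H.Walk x y)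
    (hgeo : p.length = H.dist x y) {k l : ℕ} (hk : k ≤ p.length) (hl : l ≤ p.length)
    (h : p.getVert k = p.getVert l) : k = l := by
  have h1 := (geo_exact hc p hgeo hk).1
  have h2 := (geo_exact hc p hgeo hl).1
  rw [h] at h1
  omega

private lemma edge_mem_of_succ {x y : V} (p : H.Walk x y) :
    ∀ i, i < p.length → s(p.getVert i, p.getVert (i + 1)) ∈ p.edges := by
  induction p with
  | nil => intro i h; simp at h
  | @cons u v w h q ih =>
    intro i hi
    cases i with
    | zero =>
      rw [Walk.getVert_zero, Walk.getVert_cons_succ, Walk.getVert_zero]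
      simp [Walk.edges_cons]
    | succ i =>
      rw [Walk.getVert_cons_succ, Walk.getVert_cons_succ]
      have hi' : i < q.length := by
        simp only [Walk.length_cons] at hi; omega
      simp [Walk.edges_cons, ih i hi']

private lemma exists_idx_of_edge_mem {x y : V} (p : H.Walk x y) {e : Sym2 V}
    (he : e ∈ p.edges) :
    ∃ i, i < p.length ∧ s(p.getVert i, p.getVert (i + 1)) = e := by
  induction p with
  | nil => simp at he
  | @cons u v w h q ih =>
    rw [Walk.edges_cons, List.mem_cons] at he
    rcases he with he | he
    · refine ⟨0, by simp [Walk.length_cons], ?_⟩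
      rw [Walk.getVert_zero, Walk.getVert_cons_succ, Walk.getVert_zero]
      exact he.symm
    · obtain ⟨i, h1, h2⟩ := ih he
      refine ⟨i + 1, by simp only [Walk.length_cons]; omega, ?_⟩
      rw [Walk.getVert_cons_succ, Walk.getVert_cons_succ]
      exact h2

private lemma geo_shortcut (hc : H.Connected) {x y : V} (p : H.Walk x y)
    (hgeo : p.length = H.dist x y) {i j : ℕ} (hij : i < j) (hj : j ≤ p.length)
    (hadj : H.Adj (p.getVert i) (p.getVert j))
    (hne : s(p.getVert i, p.getVert j) ∉ p.edges) : False := by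
  rcases Nat.lt_or_ge (i + 1) j with hj2 | hj2
  · have h1 : H.dist x (p.getVert i) = i := (geo_exact hc p hgeo (by omega)).1
    have h2 : H.dist (p.getVert j) y = p.length - j := (geo_exact hc p hgeo hj).2
    have h3 : H.dist (p.getVert i) (p.getVert j) ≤ 1 := dist_le_one_of_adj hadj
    have t1 := hc.dist_triangle (u := x) (v := p.getVert i) (w := p.getVert j)
    have t2 := hc.dist_triangle (u := x) (v := p.getVert j) (w := y)
    omega
  · have hji : j = i + 1 := by omega
    subst hji
    exact hne (edge_mem_of_succ p i (by omega))

private lemma dist_le_of_three [Fintype V] (hc : H.Connected) {u a b c : V}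
    (hab : a ≠ b) (hac : a ≠ c) (hbc : b ≠ c)
    (ha : H.Adj u a) (hb : H.Adj u b) (hcadj : H.Adj u c) :
    ∀ x y : V, H.dist x y + 2 ≤ Fintype.card V := by
  intro x y
  by_contra hcon
  push_neg at hcon
  obtain ⟨p, hp, hplen⟩ := hc.exists_path_of_dist x y
  have hlt := hp.length_lt
  have hcard : p.length + 1 = Fintype.card V := by omega
  have hcover := walk_covers p hp hcard
  have hgeo : p.length = H.dist x y := hplen
  obtain ⟨iu, hiu, hiule⟩ := Walk.mem_support_iff_exists_getVert.mp (hcover u)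
  have key : ∀ w : V, H.Adj u w → s(u, w) ∈ p.edges →
      (w = p.getVert (iu + 1) ∨ (1 ≤ iu ∧ w = p.getVert (iu - 1))) := by
    intro w hw hmem
    obtain ⟨i, hi, hie⟩ := exists_idx_of_edge_mem p hmem
    rw [Sym2.eq_iff] at hie
    rcases hie with ⟨h1, h2⟩ | ⟨h1, h2⟩
    · have hieq : i = iu := geo_inj hc p hgeo (by omega) hiule (h1.trans hiu.symm)
      left; rw [← hieq]; exact h2.symm
    · have hieq : i + 1 = iu := geo_inj hc p hgeo (by omega) hiule (h2.trans hiu.symm)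
      right
      refine ⟨by omega, ?_⟩
      have hieq' : i = iu - 1 := by omega
      rw [← hieq']; exact h1.symm
  have hmain : ∃ w : V, H.Adj u w ∧ w ∈ ({a, b, c} : Set V) ∧ s(u, w) ∉ p.edges := by
    by_contra hall
    push_neg at hall
    have h1 := key a ha (hall a ha (by simp))
    have h2 := key b hb (hall b hb (by simp))
    have h3 := key c hcadj (hall c hcadj (by simp))
    rcases h1 with h1 | ⟨_, h1⟩ <;> rcases h2 with h2 | ⟨_, h2⟩ <;>
      rcases h3 with h3 | ⟨_, h3⟩ <;>
      first
        | exact hab (h1.trans h2.symm)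
        | exact hac (h1.trans h3.symm)
        | exact hbc (h2.trans h3.symm)
  obtain ⟨w, hw, -, hwne⟩ := hmain
  obtain ⟨iw, hiw, hiwle⟩ := Walk.mem_support_iff_exists_getVert.mp (hcover w)
  have hneidx : iu ≠ iw := by
    intro h
    exact hw.ne (by rw [← hiu, ← hiw, h])
  rcases Nat.lt_or_ge iu iw with hlt' | hge
  · refine geo_shortcut hc p hgeo hlt' hiwle ?_ ?_
    · rw [hiu, hiw]; exact hw
    · rw [hiu, hiw]; exact hwne
  · have hlt'' : iw < iu := by omega
    refine geo_shortcut hc p hgeo hlt'' hiule ?_ ?_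
    · rw [hiu, hiw]; exact hw.symm
    · rw [hiu, hiw, Sym2.eq_swap]; exact hwne

end GraphHelpers

section TreeLemmas

variable {V : Type} {H : SimpleGraph V}

private lemma path_length_eq_dist (ha : H.IsAcyclic) {a b : V} (p : H.Walk a b)
    (hp : p.IsPath) : p.length = H.dist a b := by
  obtain ⟨q, hq, hql⟩ := (p.reachable).exists_path_of_dist
  have heq := ha.path_unique (⟨p, hp⟩ : H.Path a b) ⟨q, hq⟩
  rw [← hql]
  exact congrArg Walk.length (congrArg Subtype.val heq)

private lemma split_dist {x y : V} (p : H.Walk x y) {a : V} (ha : a ∈ p.support) :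
    H.dist x a + H.dist a y ≤ p.length := by
  classical
  have h1 := SimpleGraph.dist_le (p.takeUntil a ha)
  have h2 := SimpleGraph.dist_le (p.dropUntil a ha)
  have h3 : (p.takeUntil a ha).length + (p.dropUntil a ha).length = p.length := by
    rw [← Walk.length_append, Walk.take_spec]
  omega

private lemma tree_on_path (ha : H.IsAcyclic) {x y : V} (p : H.Walk x y) (hp : p.IsPath)
    {s : V} (hs : s ∈ p.support) : H.dist x s + H.dist s y = p.length := by
  classical
  rw [← path_length_eq_dist ha _ (hp.takeUntil hs), ← path_length_eq_dist ha _ (hp.dropUntil hs),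
    ← Walk.length_append, Walk.take_spec]

private lemma append_isPath {a b c : V} {p : H.Walk a b} {q : H.Walk b c}
    (hp : p.IsPath) (hq : q.IsPath)
    (hdisj : ∀ t, t ∈ p.support → t ∈ q.support.tail → False) :
    (p.append q).IsPath := by
  rw [Walk.isPath_def, Walk.support_append]
  exact hp.support_nodup.append (hq.support_nodup.sublist (List.tail_sublist _)) hdisj

private lemma tree_proj (hc : H.Connected) (ha : H.IsAcyclic) {x0 xd : V}
    (p : H.Walk x0 xd) (hp : p.IsPath) (z : V) :
    ∃ v, ∃ hv : v ∈ p.support,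
      H.dist z x0 = H.dist z v + H.dist v x0 ∧ H.dist z xd = H.dist z v + H.dist v xd := by
  classical
  obtain ⟨v, hvmem', hvmin'⟩ := p.support.toFinset.exists_min_image (fun t => H.dist z t)
    ⟨x0, List.mem_toFinset.mpr p.start_mem_support⟩
  have hvmem : v ∈ p.support := List.mem_toFinset.mp hvmem'
  have hmin : ∀ t ∈ p.support, H.dist z v ≤ H.dist z t :=
    fun t ht => hvmin' t (List.mem_toFinset.mpr ht)
  obtain ⟨q, hq, hql⟩ := hc.exists_path_of_dist z v
  have hkey : ∀ t, t ∈ q.support → t ∈ p.support → t = v := by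
    intro t htq htp
    have h1 := split_dist q htq
    have h2 := hmin t htp
    have h3 : H.dist t v = 0 := by omega
    exact (hc.dist_eq_zero_iff).mp h3
  refine ⟨v, hvmem, ?_, ?_⟩
  · set seg := (p.takeUntil v hvmem).reverse with hseg
    have hsegp : seg.IsPath := (hp.takeUntil hvmem).reverse
    have hw1 : (q.append seg).IsPath := by
      apply append_isPath hq hsegp
      intro t ht1 ht2
      have ht2' : t ∈ seg.support := List.mem_of_mem_tail ht2
      have htp : t ∈ p.support := by
        rw [hseg, Walk.support_reverse, List.mem_reverse] at ht2'
        exact p.support_takeUntil_subset hvmem ht2'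
      have htv := hkey t ht1 htp
      have hvtail : v ∈ seg.support.tail := htv ▸ ht2
      have hhead : seg.support = v :: seg.support.tail := Walk.support_eq_cons seg
      have hnodup := hsegp.support_nodup
      rw [hhead] at hnodup
      exact (List.nodup_cons.mp hnodup).1 hvtail
    have hlen : (q.append seg).length = H.dist z v + H.dist v x0 := by
      rw [Walk.length_append, hql, hseg, Walk.length_reverse]
      congr 1
      rw [path_length_eq_dist ha _ (hp.takeUntil hvmem)]
      exact SimpleGraph.dist_comm ..
    have := path_length_eq_dist ha _ hw1
    rw [hlen] at this
    exact this.symm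
  · set seg := p.dropUntil v hvmem with hseg
    have hsegp : seg.IsPath := hp.dropUntil hvmem
    have hw2 : (q.append seg).IsPath := by
      apply append_isPath hq hsegp
      intro t ht1 ht2
      have ht2' : t ∈ seg.support := List.mem_of_mem_tail ht2
      have htp : t ∈ p.support := p.support_dropUntil_subset hvmem ht2'
      have htv := hkey t ht1 htp
      have hvtail : v ∈ seg.support.tail := htv ▸ ht2
      have hhead : seg.support = v :: seg.support.tail := Walk.support_eq_cons seg
      have hnodup := hsegp.support_nodup
      rw [hhead] at hnodup
      exact (List.nodup_cons.mp hnodup).1 hvtail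
    have hlen : (q.append seg).length = H.dist z v + H.dist v xd := by
      rw [Walk.length_append, hql]
      congr 1
      exact path_length_eq_dist ha _ hsegp
    have := path_length_eq_dist ha _ hw2
    rw [hlen] at this
    exact this.symm

private lemma tree_key (hc : H.Connected) (ha : H.IsAcyclic) {x0 xd : V}
    (hdmax : ∀ s t : V, H.dist s t ≤ H.dist x0 xd) (z w : V) :
    H.dist z w ≤ max (H.dist z x0) (H.dist z xd) := by
  classical
  obtain ⟨p, hp, hpl⟩ := hc.exists_path_of_dist x0 xd
  obtain ⟨v, hv, hz1, hz2⟩ := tree_proj hc ha p hp z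
  obtain ⟨v', hv', hw1, hw2⟩ := tree_proj hc ha p hp w
  have hEv : H.dist x0 v + H.dist v xd = H.dist x0 xd := by
    rw [← hpl]; exact tree_on_path ha p hp hv
  have hEv' : H.dist x0 v' + H.dist v' xd = H.dist x0 xd := by
    rw [← hpl]; exact tree_on_path ha p hp hv'
  have hsplit : v' ∈ (p.takeUntil v hv).support ∨ v' ∈ (p.dropUntil v hv).support := by
    have hv'' := hv'
    rw [← Walk.take_spec p hv] at hv''
    exact (Walk.mem_support_append_iff _ _).mp hv''
  have c1 := hc.dist_triangle (u := z) (v := v) (w := w)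
  have c2 := hc.dist_triangle (u := v) (v := v') (w := w)
  have comm1 : H.dist v v' = H.dist v' v := SimpleGraph.dist_comm ..
  have comm2 : H.dist v' w = H.dist w v' := SimpleGraph.dist_comm ..
  have comm3 : H.dist v x0 = H.dist x0 v := SimpleGraph.dist_comm ..
  have comm4 : H.dist v' x0 = H.dist x0 v' := SimpleGraph.dist_comm ..
  have comm5 : H.dist v xd = H.dist xd v := SimpleGraph.dist_comm ..
  rcases hsplit with hcase | hcase
  · -- v' lies between x0 and v : conclude dist z w ≤ dist z x0
    have hq1 := path_length_eq_dist ha _ ((hp.takeUntil hv).takeUntil hcase)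
    have hq2 := path_length_eq_dist ha _ ((hp.takeUntil hv).dropUntil hcase)
    have hq3 : ((p.takeUntil v hv).takeUntil v' hcase).length
        + ((p.takeUntil v hv).dropUntil v' hcase).length = (p.takeUntil v hv).length := by
      rw [← Walk.length_append, Walk.take_spec]
    have hq4 := path_length_eq_dist ha _ (hp.takeUntil hv)
    -- t1 : dist x0 v' + dist v' v = dist x0 v
    have t1 : H.dist x0 v' + H.dist v' v = H.dist x0 v := by omega
    have hD : H.dist w v' ≤ H.dist x0 v' := by
      have := hdmax w xd
      omega
    have : H.dist z w ≤ H.dist z x0 := by omega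
    exact le_trans this (le_max_left _ _)
  · -- v' lies between v and xd : conclude dist z w ≤ dist z xd
    have hq1 := path_length_eq_dist ha _ ((hp.dropUntil hv).takeUntil hcase)
    have hq2 := path_length_eq_dist ha _ ((hp.dropUntil hv).dropUntil hcase)
    have hq3 : ((p.dropUntil v hv).takeUntil v' hcase).length
        + ((p.dropUntil v hv).dropUntil v' hcase).length = (p.dropUntil v hv).length := by
      rw [← Walk.length_append, Walk.take_spec]
    have hq4 := path_length_eq_dist ha _ (hp.dropUntil hv)
    have t1 : H.dist v v' + H.dist v' xd = H.dist v xd := by omega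
    have hD : H.dist w v' ≤ H.dist v' xd := by
      have := hdmax w x0
      have commw : H.dist w x0 = H.dist x0 w := SimpleGraph.dist_comm ..
      omega
    have : H.dist z w ≤ H.dist z xd := by omega
    exact le_trans this (le_max_right _ _)

end TreeLemmas

section TreeBound

variable {V : Type} [Fintype V]

private lemma tree_bound [Nonempty V] {T : SimpleGraph V}
    (hc : T.Connected) (ha : T.IsAcyclic) :
    (∑ v, ecc T v) + sfun (Finset.univ.sup (ecc T))
      ≤ Fintype.card V * (Finset.univ.sup (ecc T)) := by
  classical
  set d := Finset.univ.sup (ecc T) with hd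
  obtain ⟨x0, -, hx0⟩ := Finset.exists_mem_eq_sup (Finset.univ : Finset V)
    Finset.univ_nonempty (ecc T)
  obtain ⟨xd, -, hxd⟩ := Finset.exists_mem_eq_sup (Finset.univ : Finset V)
    Finset.univ_nonempty (fun w => T.dist x0 w)
  have hdx : T.dist x0 xd = d := by
    rw [hd, hx0]
    exact hxd.symm
  have hdall : ∀ s t : V, T.dist s t ≤ T.dist x0 xd := by
    intro s t
    rw [hdx]
    calc T.dist s t ≤ ecc T s := Finset.le_sup (Finset.mem_univ t)
      _ ≤ d := Finset.le_sup (Finset.mem_univ s)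
  have hkey := tree_key hc ha hdall
  have hdistle : ∀ v w : V, T.dist v w ≤ d := by
    intro v w
    rw [← hdx]; exact hdall v w
  have hper : ∀ v, ecc T v + min (d - T.dist v x0) (d - T.dist v xd) ≤ d := by
    intro v
    have h1 : ecc T v ≤ max (T.dist v x0) (T.dist v xd) :=
      Finset.sup_le (fun w _ => hkey v w)
    have h2 := hdistle v x0
    have h3 := hdistle v xd
    simp only [Nat.max_def] at h1
    simp only [Nat.min_def]
    split_ifs at h1 ⊢ <;> omega
  obtain ⟨p, hp, hpl⟩ := hc.exists_path_of_dist x0 xd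
  have hgeo : p.length = T.dist x0 xd := hpl
  have hplen : p.length = d := by rw [hpl, hdx]
  set f : V → ℕ := fun v => min (d - T.dist v x0) (d - T.dist v xd) with hf
  have himg : ∀ k ∈ Finset.range (d + 1), f (p.getVert k) = min k (d - k) := by
    intro k hk
    rw [Finset.mem_range] at hk
    obtain ⟨e1, e2⟩ := geo_exact hc p hgeo (k := k) (by omega)
    have c1 : T.dist (p.getVert k) x0 = k := by
      rw [SimpleGraph.dist_comm]; exact e1
    have c2 : T.dist (p.getVert k) xd = d - k := by
      rw [← hplen]; exact e2
    rw [hf]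
    simp only
    rw [c1, c2]
    have haux : d - (d - k) = k := by omega
    rw [haux, Nat.min_comm]
  have hsum1 : ∑ k ∈ Finset.range (d + 1), min k (d - k)
      = ∑ v ∈ (Finset.range (d + 1)).image p.getVert, f v := by
    rw [Finset.sum_image (fun a haa b hbb hab => by
      simp only [Finset.mem_coe, Finset.mem_range] at haa hbb
      exact geo_inj hc p hgeo (by omega) (by omega) hab)]
    exact (Finset.sum_congr rfl himg).symm
  have hsum2 : ∑ v ∈ (Finset.range (d + 1)).image p.getVert, f v ≤ ∑ v, f v :=
    Finset.sum_le_sum_of_subset (Finset.subset_univ _)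
  have hsfun : sfun d ≤ ∑ v, f v := by
    unfold sfun
    rw [hsum1]
    exact hsum2
  have htot : (∑ v, ecc T v) + (∑ v, f v) ≤ Fintype.card V * d := by
    rw [← Finset.sum_add_distrib]
    calc ∑ v, (ecc T v + f v) ≤ ∑ _v : V, d := Finset.sum_le_sum (fun v _ => hper v)
      _ = Fintype.card V * d := by rw [Finset.sum_const, Finset.card_univ, smul_eq_mul]
  omega

private lemma finish_tree {G T : SimpleGraph V} (hne : Nonempty V)
    (hTG : T ≤ G) (hTc : T.Connected) (hTa : T.IsAcyclic)
    (hdd : ∀ x y, T.dist x y + 2 ≤ Fintype.card V) :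
    totalEcc G + sfun (Fintype.card V - 2) ≤ Fintype.card V * (Fintype.card V - 2) := by
  haveI := hne
  have hdT : Finset.univ.sup (ecc T) ≤ Fintype.card V - 2 := by
    apply Finset.sup_le
    intro v _
    apply Finset.sup_le
    intro w _
    have := hdd v w
    omega
  have htb := tree_bound hTc hTa
  have hmono := sfun_mono_lin (Fintype.card V) (Finset.univ.sup (ecc T)) (Fintype.card V - 2)
    hdT (by omega)
  have hGT : totalEcc G ≤ ∑ v, ecc T v := by
    unfold totalEcc
    apply Finset.sum_le_sum
    intro v _
    apply Finset.sup_le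
    intro w _
    calc G.dist v w ≤ T.dist v w :=
          SimpleGraph.Reachable.dist_anti hTG (hTc.preconnected v w)
      _ ≤ ecc T v := Finset.le_sup (Finset.mem_univ w)
  omega

end TreeBound

section EdgeCount

variable {V : Type}

private lemma del_conn {H : SimpleGraph V} (hc : H.Connected) {u v : V}
    (hadj : H.Adj u v) (hnb : ¬H.IsBridge s(u, v)) :
    (H.deleteEdges {s(u, v)}).Connected := by
  rw [SimpleGraph.isBridge_iff] at hnb
  push_neg at hnb
  have hre : (H.deleteEdges {s(u, v)}).Reachable u v := hnb
  have key : ∀ {a b : V}, H.Walk a b → (H.deleteEdges {s(u, v)}).Reachable a b := by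
    intro a b w
    induction w with
    | nil => exact Reachable.refl _
    | @cons a' c' b' h q ih =>
      refine Reachable.trans ?_ ih
      by_cases he : s(a', c') = s(u, v)
      · rw [Sym2.eq_iff] at he
        rcases he with ⟨h1, h2⟩ | ⟨h1, h2⟩
        · subst h1; subst h2; exact hre
        · subst h1; subst h2; exact hre.symm
      · exact (SimpleGraph.deleteEdges_adj.mpr ⟨h, by simpa using he⟩).reachable
  rw [SimpleGraph.connected_iff]
  exact ⟨fun a b => (hc.preconnected a b).elim (fun w => key w), hc.nonempty⟩

private lemma ncard_del [Fintype V] (H : SimpleGraph V) {e : Sym2 V} (he : e ∈ H.edgeSet) :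
    (H.deleteEdges {e}).edgeSet.ncard + 1 = H.edgeSet.ncard := by
  rw [SimpleGraph.edgeSet_deleteEdges]
  exact Set.ncard_diff_singleton_add_one he

private lemma tree_card [Fintype V] {H : SimpleGraph V} (ht : H.IsTree) :
    H.edgeSet.ncard + 1 = Fintype.card V := by
  classical
  haveI : Fintype H.edgeSet := Fintype.ofFinite _
  have h := ht.card_edgeFinset
  rw [Set.ncard_eq_toFinset_card']
  exact h

private lemma edge_lb [Fintype V] :
    ∀ (k : ℕ) (H : SimpleGraph V), H.Connected → H.edgeSet.ncard = k →
      Fintype.card V - 1 ≤ k := by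
  intro k
  induction k using Nat.strong_induction_on with
  | _ k ih =>
    intro H hcon hk
    by_cases ha : H.IsAcyclic
    · have := tree_card ⟨hcon, ha⟩
      omega
    · rw [SimpleGraph.isAcyclic_iff_forall_edge_isBridge] at ha
      push_neg at ha
      obtain ⟨e, he, hnb⟩ := ha
      obtain ⟨u, v, he, hnb⟩ : ∃ u v, s(u, v) ∈ H.edgeSet ∧ ¬H.IsBridge s(u, v) := by
        revert he hnb
        induction e using Sym2.ind with
        | _ x y => exact fun h1 h2 => ⟨x, y, h1, h2⟩
      have hc' := del_conn hcon ((H.mem_edgeSet).mp he) hnb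
      have hcd := ncard_del H he
      have := ih ((H.deleteEdges {s(u, v)}).edgeSet.ncard) (by omega) _ hc' rfl
      omega

private lemma acyclic_of_count [Fintype V] {H : SimpleGraph V} (hcon : H.Connected)
    (hcount : H.edgeSet.ncard + 1 = Fintype.card V) : H.IsAcyclic := by
  by_contra ha
  rw [SimpleGraph.isAcyclic_iff_forall_edge_isBridge] at ha
  push_neg at ha
  obtain ⟨e, he, hnb⟩ := ha
  obtain ⟨u, v, he, hnb⟩ : ∃ u v, s(u, v) ∈ H.edgeSet ∧ ¬H.IsBridge s(u, v) := by
    revert he hnb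
    induction e using Sym2.ind with
    | _ x y => exact fun h1 h2 => ⟨x, y, h1, h2⟩
  have hc' := del_conn hcon ((H.mem_edgeSet).mp he) hnb
  have h1 := ncard_del H he
  have h2 := edge_lb _ _ hc' rfl
  omega

end EdgeCount

section RHS

private lemma rhs_lower (n : ℕ) (hn : 6 ≤ n) (h0 : (0 : ℕ) < n) (h2 : (2 : ℕ) < n) :
    n * (n - 2) ≤ totalEcc (SimpleGraph.pathGraph n ⊔
      SimpleGraph.fromEdgeSet {s((⟨0, h0⟩ : Fin n), (⟨2, h2⟩ : Fin n))}) + sfun (n - 2) := by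
  set U := SimpleGraph.pathGraph n ⊔
      SimpleGraph.fromEdgeSet {s((⟨0, h0⟩ : Fin n), (⟨2, h2⟩ : Fin n))} with hU
  -- path adjacency inside U
  have hpadj : ∀ (a b : Fin n), a.val + 1 = b.val → U.Adj a b := by
    intro a b h
    rw [hU, SimpleGraph.sup_adj]
    exact Or.inl (SimpleGraph.pathGraph_adj.mpr (Or.inl h))
  -- Lipschitz property of i ↦ max i 1
  have hlip : ∀ (a b : Fin n), U.Adj a b → max b.val 1 ≤ max a.val 1 + 1 := by
    intro a b hab
    rw [hU, SimpleGraph.sup_adj] at hab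
    rcases hab with hp | hcc
    · rw [SimpleGraph.pathGraph_adj] at hp
      simp only [Nat.max_def]
      split_ifs <;> omega
    · rw [SimpleGraph.fromEdgeSet_adj] at hcc
      obtain ⟨hmem, -⟩ := hcc
      rw [Set.mem_singleton_iff, Sym2.eq_iff] at hmem
      rcases hmem with ⟨ha, hb⟩ | ⟨ha, hb⟩
      · have ha' : a.val = 0 := by rw [ha]
        have hb' : b.val = 2 := by rw [hb]
        simp only [Nat.max_def]
        split_ifs <;> omega
      · have ha' : a.val = 2 := by rw [ha]
        have hb' : b.val = 0 := by rw [hb]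
        simp only [Nat.max_def]
        split_ifs <;> omega
  have hwalk : ∀ {a b : Fin n} (w : U.Walk a b), max b.val 1 ≤ max a.val 1 + w.length := by
    intro a b w
    induction w with
    | nil => simp
    | @cons a' c' b' h q ih =>
      have := hlip a' c' h
      rw [SimpleGraph.Walk.length_cons]
      omega
  have hreach : ∀ a b : Fin n, U.Reachable a b := by
    have haux : ∀ k (hk : k < n), U.Reachable ⟨0, h0⟩ ⟨k, hk⟩ := by
      intro k
      induction k with
      | zero => intro hk; exact SimpleGraph.Reachable.refl _
      | succ k ihk =>
        intro hk
        have h1 : k < n := by omega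
        exact (ihk h1).trans (hpadj ⟨k, h1⟩ ⟨k + 1, hk⟩ rfl).reachable
    intro a b
    exact ((haux a.1 a.2).symm).trans (haux b.1 b.2)
  have hdistlow : ∀ (a b : Fin n), max b.val 1 ≤ max a.val 1 + U.dist a b := by
    intro a b
    obtain ⟨w, hw⟩ := (hreach a b).exists_walk_length_eq_dist
    rw [← hw]
    exact hwalk w
  -- eccentricity lower bounds
  have heccl : ∀ i : Fin n,
      max (max i.val 1 - 1) (n - 1 - max i.val 1) ≤ ecc U i := by
    intro i
    have hn1 : n - 1 < n := by omega
    have e1 : max i.val 1 ≤ 1 + U.dist (⟨0, h0⟩ : Fin n) i := by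
      have := hdistlow ⟨0, h0⟩ i
      simpa using this
    have e2 : n - 1 ≤ max i.val 1 + U.dist i ⟨n - 1, hn1⟩ := by
      have := hdistlow i ⟨n - 1, hn1⟩
      have h' : max (n - 1) 1 = n - 1 := by
        simp only [Nat.max_def]; split_ifs <;> omega
      rw [h'] at this
      exact this
    have d1 : U.dist i (⟨0, h0⟩ : Fin n) ≤ ecc U i := Finset.le_sup (Finset.mem_univ _)
    have d2 : U.dist i (⟨n - 1, hn1⟩ : Fin n) ≤ ecc U i := Finset.le_sup (Finset.mem_univ _)
    have hcomm : U.dist (⟨0, h0⟩ : Fin n) i = U.dist i (⟨0, h0⟩ : Fin n) :=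
      SimpleGraph.dist_comm ..
    rw [hcomm] at e1
    apply max_le <;> omega
  -- summation
  have hsumlow : (∑ i : Fin n, max (max i.val 1 - 1) (n - 1 - max i.val 1)) ≤ totalEcc U := by
    unfold totalEcc
    exact Finset.sum_le_sum (fun i _ => heccl i)
  set g : ℕ → ℕ := fun k => max (max k 1 - 1) (n - 1 - max k 1) with hg
  have h1 : (∑ i : Fin n, max (max i.val 1 - 1) (n - 1 - max i.val 1))
      = ∑ k ∈ Finset.range n, g k := by
    rw [← Fin.sum_univ_eq_sum_range]
  have hnn : n = (n - 1) + 1 := by omega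
  have h2' : ∑ k ∈ Finset.range n, g k = (∑ j ∈ Finset.range (n - 1), g (j + 1)) + g 0 := by
    conv_lhs => rw [hnn]
    exact Finset.sum_range_succ' g (n - 1)
  have h3 : sfun (n - 2) = ∑ j ∈ Finset.range (n - 1), min j (n - 2 - j) := by
    have hr : n - 2 + 1 = n - 1 := by omega
    unfold sfun
    rw [hr]
  have h4 : (∑ j ∈ Finset.range (n - 1), g (j + 1))
      + (∑ j ∈ Finset.range (n - 1), min j (n - 2 - j))
      = ∑ _j ∈ Finset.range (n - 1), (n - 2) := by
    rw [← Finset.sum_add_distrib]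
    apply Finset.sum_congr rfl
    intro j hj
    rw [Finset.mem_range] at hj
    rw [hg]
    simp only [Nat.max_def, Nat.min_def]
    split_ifs <;> omega
  have h5 : ∑ _j ∈ Finset.range (n - 1), (n - 2) = (n - 1) * (n - 2) := by
    rw [Finset.sum_const, Finset.card_range, smul_eq_mul]
  have h6 : g 0 = n - 2 := by
    rw [hg]
    simp only [Nat.max_def, Nat.min_def]
    split_ifs <;> omega
  have h7 : n * (n - 2) = (n - 1) * (n - 2) + (n - 2) := by
    obtain ⟨m, hm⟩ : ∃ m, n = m + 6 := ⟨n - 6, by omega⟩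
    subst hm
    have e1 : m + 6 - 2 = m + 4 := by omega
    have e2 : m + 6 - 1 = m + 5 := by omega
    rw [e1, e2]
    ring
  omega

end RHS

section MainUpper

private lemma case_del {V : Type} [Fintype V] {G : SimpleGraph V}
    (hne : Nonempty V) (hconn : G.Connected)
    (hsizeV : G.edgeSet.ncard = Fintype.card V)
    (f : ℕ → V)
    (hcov : ∀ v : V, ∃ k, k ≤ Fintype.card V - 1 ∧ f k = v)
    (hinj : ∀ k l, k ≤ Fintype.card V - 1 → l ≤ Fintype.card V - 1 → f k = f l → k = l)
    (hGadj : ∀ k, k < Fintype.card V - 1 → G.Adj (f k) (f (k + 1)))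
    {kdel ic jc zc zo : ℕ}
    (hkdel : kdel < Fintype.card V - 1)
    (hic : ic ≤ kdel) (hjc : kdel + 1 ≤ jc) (hjcle : jc ≤ Fintype.card V - 1)
    (hchord : G.Adj (f ic) (f jc))
    (hnd : ¬(ic = kdel ∧ jc = kdel + 1))
    (hzo : (zc = ic ∧ zo = jc) ∨ (zc = jc ∧ zo = ic))
    (hzc1 : 1 ≤ zc) (hzc2 : zc + 1 ≤ Fintype.card V - 1)
    (hz3 : zc - 1 ≠ kdel) (hz4 : zc ≠ kdel) :
    totalEcc G + sfun (Fintype.card V - 2) ≤ Fintype.card V * (Fintype.card V - 2) := by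
  have hjc2 : ic + 2 ≤ jc := by
    rcases Nat.eq_or_lt_of_le hjc with h | h
    · have : ic ≠ kdel := fun hh => hnd ⟨hh, h.symm⟩
      omega
    · omega
  set edel := s(f kdel, f (kdel + 1)) with hedel
  have hedelmem : edel ∈ G.edgeSet := (G.mem_edgeSet).mpr (hGadj kdel hkdel)
  set T2 := G.deleteEdges {edel} with hT2
  have hT2G : T2 ≤ G := SimpleGraph.deleteEdges_le _
  have hT2adj : ∀ k, k < Fintype.card V - 1 → k ≠ kdel → T2.Adj (f k) (f (k + 1)) := by
    intro k hk hkne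
    rw [hT2, SimpleGraph.deleteEdges_adj]
    refine ⟨hGadj k hk, ?_⟩
    rw [Set.mem_singleton_iff, hedel, Sym2.eq_iff]
    rintro (⟨hh1, hh2⟩ | ⟨hh1, hh2⟩)
    · exact hkne (hinj k kdel (by omega) (by omega) hh1)
    · have e1 := hinj k (kdel + 1) (by omega) (by omega) hh1
      have e2 := hinj (k + 1) kdel (by omega) (by omega) hh2
      omega
  have hT2chord : T2.Adj (f ic) (f jc) := by
    rw [hT2, SimpleGraph.deleteEdges_adj]
    refine ⟨hchord, ?_⟩
    rw [Set.mem_singleton_iff, hedel, Sym2.eq_iff]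
    rintro (⟨hh1, hh2⟩ | ⟨hh1, hh2⟩)
    · have e1 := hinj ic kdel (by omega) (by omega) hh1
      have e2 := hinj jc (kdel + 1) hjcle (by omega) hh2
      exact hnd ⟨e1, e2⟩
    · have e1 := hinj ic (kdel + 1) (by omega) (by omega) hh1
      omega
  have hchainT2 : ∀ s t, s ≤ t → t ≤ Fintype.card V - 1 →
      (∀ k, s ≤ k → k < t → k ≠ kdel) → T2.Reachable (f s) (f t) := by
    intro s t hst htle hnk
    exact reach_chain T2 f s t hst (fun k hh1 hh2 => hT2adj k (by omega) (hnk k hh1 hh2))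
  have hpivot : ∀ m, m ≤ Fintype.card V - 1 → T2.Reachable (f ic) (f m) := by
    intro m hm
    rcases Nat.lt_or_ge kdel m with h | h
    · have hjm : T2.Reachable (f jc) (f m) := by
        rcases Nat.le_total jc m with hh | hh
        · exact hchainT2 jc m hh hm (fun k h1 h2 => by omega)
        · exact (hchainT2 m jc hh hjcle (fun k h1 h2 => by omega)).symm
      exact (hT2chord.reachable).trans hjm
    · rcases Nat.le_total ic m with hh | hh
      · exact hchainT2 ic m hh (by omega) (fun k h1 h2 => by omega)
      · exact (hchainT2 m ic hh (by omega) (fun k h1 h2 => by omega)).symm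
  have hT2conn : T2.Connected := by
    rw [SimpleGraph.connected_iff]
    refine ⟨?_, hne⟩
    intro v w
    obtain ⟨a, hale, hav⟩ := hcov v
    obtain ⟨b, hble, hbv⟩ := hcov w
    rw [← hav, ← hbv]
    exact ((hpivot a hale).symm).trans (hpivot b hble)
  have hT2card : T2.edgeSet.ncard + 1 = Fintype.card V := by
    have h' := ncard_del G hedelmem
    rw [← hT2] at h'
    omega
  have hT2a : T2.IsAcyclic := acyclic_of_count hT2conn hT2card
  have hzo_le : zo ≤ Fintype.card V - 1 := by
    rcases hzo with ⟨h1, h2⟩ | ⟨h1, h2⟩ <;> omega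
  have hzo_d1 : zo ≠ zc - 1 := by
    rcases hzo with ⟨h1, h2⟩ | ⟨h1, h2⟩ <;> omega
  have hzo_d2 : zo ≠ zc + 1 := by
    rcases hzo with ⟨h1, h2⟩ | ⟨h1, h2⟩ <;> omega
  have hchordzo : T2.Adj (f zc) (f zo) := by
    rcases hzo with ⟨h1, h2⟩ | ⟨h1, h2⟩
    · rw [h1, h2]; exact hT2chord
    · rw [h1, h2]; exact hT2chord.symm
  have hadj1 : T2.Adj (f zc) (f (zc - 1)) := by
    have h' := hT2adj (zc - 1) (by omega) hz3
    have hz : zc - 1 + 1 = zc := by omega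
    rw [hz] at h'
    exact h'.symm
  have hadj2 : T2.Adj (f zc) (f (zc + 1)) := hT2adj zc (by omega) hz4
  have hne12 : f (zc - 1) ≠ f (zc + 1) := fun h => by
    have := hinj _ _ (by omega) (by omega) h
    omega
  have hne13 : f (zc - 1) ≠ f zo := fun h => by
    have := hinj _ _ (by omega) hzo_le h
    omega
  have hne23 : f (zc + 1) ≠ f zo := fun h => by
    have := hinj _ _ (by omega) hzo_le h
    omega
  have hdia := dist_le_of_three hT2conn hne12 hne13 hne23 hadj1 hadj2 hchordzo
  exact finish_tree hne hT2G hT2conn hT2a hdia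

end MainUpper


set_option maxHeartbeats 2000000 in
/-- Among all `n`-vertex conjugated unicyclic graphs (`n` even, `n ≥ 6`), the graph
`U̅₂` obtained from the path `v₁v₂⋯vₙ` by adding the edge `v₁v₃` has the maximal
total-eccentricity index. -/
theorem maximal_conjugated_unicyclic (n : ℕ) (hn : 6 ≤ n) (hev : Even n)
    (V : Type) [Fintype V] (G : SimpleGraph V)
    (hcard : Fintype.card V = n)
    (hconn : G.Connected) (hsize : G.edgeSet.ncard = n)
    (hpm : ∃ M : G.Subgraph, M.IsPerfectMatching) :
    totalEcc G ≤
      totalEcc (pathGraph n ⊔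
        fromEdgeSet {s((⟨0, by omega⟩ : Fin n), (⟨2, by omega⟩ : Fin n))}) := by
  clear hpm
  have h0 : (0 : ℕ) < n := by omega
  have h2 : (2 : ℕ) < n := by omega
  haveI hne : Nonempty V := by
    have : 0 < Fintype.card V := by omega
    exact Fintype.card_pos_iff.mp this
  have hL : n * (n - 2) ≤ totalEcc (pathGraph n ⊔
      fromEdgeSet {s((⟨0, by omega⟩ : Fin n), (⟨2, by omega⟩ : Fin n))}) + sfun (n - 2) :=
    rhs_lower n hn h0 h2
  suffices hUb : totalEcc G + sfun (n - 2) ≤ n * (n - 2) by omega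
  have hcV : Fintype.card V = n := hcard
  -- G is not acyclic
  have hnotacyc : ¬G.IsAcyclic := by
    intro ha
    have := tree_card ⟨hconn, ha⟩
    omega
  rw [SimpleGraph.isAcyclic_iff_forall_edge_isBridge] at hnotacyc
  push_neg at hnotacyc
  obtain ⟨e1, he1', hnb1'⟩ := hnotacyc
  obtain ⟨u1, u2, he1, hnb1⟩ : ∃ u1 u2, s(u1, u2) ∈ G.edgeSet ∧ ¬G.IsBridge s(u1, u2) := by
    revert he1' hnb1'
    induction e1 using Sym2.ind with
    | _ x y => exact fun hh1 hh2 => ⟨x, y, hh1, hh2⟩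
  have hadj1 : G.Adj u1 u2 := (G.mem_edgeSet).mp he1
  set T1 := G.deleteEdges {s(u1, u2)} with hT1
  have hT1c : T1.Connected := del_conn hconn hadj1 hnb1
  have hT1card : T1.edgeSet.ncard + 1 = Fintype.card V := by
    have h' := ncard_del G he1
    rw [← hT1] at h'
    omega
  have hT1a : T1.IsAcyclic := acyclic_of_count hT1c hT1card
  have hT1G : T1 ≤ G := SimpleGraph.deleteEdges_le _
  by_cases hdia : ∀ x y, T1.dist x y + 2 ≤ Fintype.card V
  · have := finish_tree hne hT1G hT1c hT1a hdia
    rw [hcV] at this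
    exact this
  · push_neg at hdia
    obtain ⟨x0, xd, hxd⟩ := hdia
    obtain ⟨p, hp, hpl⟩ := hT1c.exists_path_of_dist x0 xd
    have hgeo : p.length = T1.dist x0 xd := hpl
    have hplt : p.length < Fintype.card V := hp.length_lt
    have hlen : p.length = Fintype.card V - 1 := by omega
    have hcov : ∀ v, v ∈ p.support := walk_covers p hp (by omega)
    have hcov' : ∀ v : V, ∃ k, k ≤ Fintype.card V - 1 ∧ p.getVert k = v := by
      intro v
      obtain ⟨k, hk1, hk2⟩ := Walk.mem_support_iff_exists_getVert.mp (hcov v)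
      exact ⟨k, by omega, hk1⟩
    have hinj : ∀ k l, k ≤ Fintype.card V - 1 → l ≤ Fintype.card V - 1 →
        p.getVert k = p.getVert l → k = l := by
      intro k l hk hl h
      exact geo_inj hT1c p hgeo (by omega) (by omega) h
    have hGadj : ∀ k, k < Fintype.card V - 1 → G.Adj (p.getVert k) (p.getVert (k + 1)) := by
      intro k hk
      exact hT1G (p.adj_getVert_succ (by omega))
    obtain ⟨a1, ha1le, ha1⟩ := hcov' u1
    obtain ⟨a2, ha2le, ha2⟩ := hcov' u2
    have hane : a1 ≠ a2 := fun h => hadj1.ne (by rw [← ha1, ← ha2, h])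
    obtain ⟨i0, j0, hij, hj0le, hchord, hchordeq⟩ :
        ∃ i0 j0, i0 < j0 ∧ j0 ≤ Fintype.card V - 1 ∧
          G.Adj (p.getVert i0) (p.getVert j0) ∧
          s(p.getVert i0, p.getVert j0) = s(u1, u2) := by
      rcases Nat.lt_or_ge a1 a2 with h | h
      · exact ⟨a1, a2, h, ha2le, by rw [ha1, ha2]; exact hadj1, by rw [ha1, ha2]⟩
      · have h' : a2 < a1 := by omega
        exact ⟨a2, a1, h', ha1le, by rw [ha1, ha2]; exact hadj1.symm,
          by rw [ha1, ha2]; exact Sym2.eq_swap⟩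
    have hj2 : i0 + 2 ≤ j0 := by
      by_contra hcon
      have hj1 : j0 = i0 + 1 := by omega
      have hT1adj : T1.Adj (p.getVert i0) (p.getVert (i0 + 1)) := p.adj_getVert_succ (by omega)
      have hnotmem := (SimpleGraph.deleteEdges_adj.mp hT1adj).2
      apply hnotmem
      rw [Set.mem_singleton_iff, ← hchordeq, hj1]
    by_cases hB1 : i0 = 0 ∧ j0 = Fintype.card V - 1
    · -- G contains a Hamilton cycle : direct bound
      obtain ⟨hi0, hj0⟩ := hB1
      rw [hi0, hj0] at hchord
      have hecc : ∀ v : V, ecc G v ≤ n / 2 := by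
        intro v
        obtain ⟨a, hale, hav⟩ := hcov' v
        apply Finset.sup_le
        intro w _
        obtain ⟨b, hble, hbv⟩ := hcov' w
        rw [← hav, ← hbv]
        have haux : ∀ s t, s ≤ t → t ≤ Fintype.card V - 1 →
            G.dist (p.getVert s) (p.getVert t) ≤ n / 2 := by
          intro s t hst htle
          have hb1 : G.dist (p.getVert s) (p.getVert t) ≤ t - s :=
            chain_dist hconn p.getVert s t hst (fun k h1 h2 => hGadj k (by omega))
          have hd1 : G.dist (p.getVert 0) (p.getVert s) ≤ s := by
            have := chain_dist hconn p.getVert 0 s (by omega)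
              (fun k h1 h2 => hGadj k (by omega))
            omega
          have hd2 : G.dist (p.getVert t) (p.getVert (Fintype.card V - 1))
              ≤ Fintype.card V - 1 - t :=
            chain_dist hconn p.getVert t (Fintype.card V - 1) (by omega)
              (fun k h1 h2 => hGadj k (by omega))
          have hch : G.dist (p.getVert 0) (p.getVert (Fintype.card V - 1)) ≤ 1 :=
            dist_le_one_of_adj hchord
          have t1 := hconn.dist_triangle (u := p.getVert s) (v := p.getVert 0)
            (w := p.getVert t)
          have t2 := hconn.dist_triangle (u := p.getVert 0)
            (v := p.getVert (Fintype.card V - 1)) (w := p.getVert t)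
          have c1 : G.dist (p.getVert s) (p.getVert 0) = G.dist (p.getVert 0) (p.getVert s) :=
            SimpleGraph.dist_comm ..
          have c2 : G.dist (p.getVert (Fintype.card V - 1)) (p.getVert t)
              = G.dist (p.getVert t) (p.getVert (Fintype.card V - 1)) :=
            SimpleGraph.dist_comm ..
          obtain ⟨m, hm⟩ := hev
          omega
        rcases Nat.le_total a b with h | h
        · exact haux a b h hble
        · rw [SimpleGraph.dist_comm]
          exact haux b a h hale
      have hsum : totalEcc G ≤ n * (n / 2) := by
        unfold totalEcc
        calc ∑ v, ecc G v ≤ ∑ _v : V, n / 2 := Finset.sum_le_sum (fun v _ => hecc v)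
          _ = n * (n / 2) := by rw [Finset.sum_const, Finset.card_univ, hcV, smul_eq_mul]
      obtain ⟨m, hm⟩ := hev
      have key : n * (n / 2) + sfun (n - 2) ≤ n * (n - 2) := by
        obtain ⟨q, hq⟩ : ∃ q, m = q + 1 := ⟨m - 1, by omega⟩
        have e0 : n / 2 = q + 1 := by omega
        have e1 : n - 2 = 2 * q := by omega
        have e2 : n = 2 * q + 2 := by omega
        rw [e0, e1, e2]
        have hs := sfun_sq (2 * q)
        have hs' : 4 * sfun (2 * q) ≤ 2 * q * (2 * q) := by omega
        have hq2 : 2 ≤ q := by omega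
        nlinarith [hs', hq2]
      omega
    · -- a second spanning tree with small diameter exists
      rcases Nat.lt_or_ge j0 (Fintype.card V - 1) with hj0lt | hj0ge
      · -- delete the path edge (i0, i0+1); center j0
        have := case_del (hne := hne) (hconn := hconn) (hsizeV := by omega)
          (f := p.getVert) (hcov := hcov') (hinj := hinj) (hGadj := hGadj)
          (kdel := i0) (ic := i0) (jc := j0) (zc := j0) (zo := i0)
          (hkdel := by omega) (hic := by omega) (hjc := by omega) (hjcle := hj0le)
          (hchord := hchord) (hnd := by rintro ⟨hh1, hh2⟩; omega)
          (hzo := Or.inr ⟨rfl, rfl⟩)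
          (hzc1 := by omega) (hzc2 := by omega) (hz3 := by omega) (hz4 := by omega)
        rw [hcV] at this
        exact this
      · -- j0 = card - 1 and i0 ≥ 1 : delete the path edge (card-2, card-1); center i0
        have hj0eq : j0 = Fintype.card V - 1 := by omega
        have hi0pos : 1 ≤ i0 := by
          by_contra hcon
          exact hB1 ⟨by omega, hj0eq⟩
        have f1 : n - 2 < Fintype.card V - 1 := by omega
        have f2 : i0 ≤ n - 2 := by omega
        have f3 : (n - 2) + 1 ≤ j0 := by omega
        have f4 : ¬(i0 = n - 2 ∧ j0 = (n - 2) + 1) := by rintro ⟨hh1, hh2⟩; omega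
        have f5 : 1 ≤ i0 := hi0pos
        have f6 : i0 + 1 ≤ Fintype.card V - 1 := by omega
        have f7 : i0 - 1 ≠ n - 2 := by omega
        have f8 : i0 ≠ n - 2 := by omega
        have hszV : G.edgeSet.ncard = Fintype.card V := by omega
        have := case_del (hne := hne) (hconn := hconn) (hsizeV := hszV)
          (f := p.getVert) (hcov := hcov') (hinj := hinj) (hGadj := hGadj)
          (kdel := n - 2) (ic := i0) (jc := j0) (zc := i0) (zo := j0)
          (hkdel := f1) (hic := f2) (hjc := f3) (hjcle := hj0le)
          (hchord := hchord) (hnd := f4)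
          (hzo := Or.inl ⟨rfl, rfl⟩)
          (hzc1 := f5) (hzc2 := f6) (hz3 := f7) (hz4 := f8)
        rw [hcV] at this
        exact this
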